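/- Let W be a module and a, b fixed submodules. On the set C_{ab} of common complements of a and b, the ternary operation (x y z) := M_{xabz}(y), where M_{xabz} = P^a_x - P^z_b applied to the submodule y (image of y under this linear map), satisfies the torsor identities: (x y y) = x, (y y x) = x, and (x y (z u v)) = ((x y z) u v) for all x, y, z, u, v ∈ C_{ab}. -/

import Mathlib

-- P^a_x, defined to be 0 when x and a are not complementary.
open Classical in
noncomputable def projEnd {R W : Type*} [Ring R] [AddCommGroup W] [Module R W]
    (x a : Submodule R W) : Module.End R W :=
  if h : IsCompl x a then x.subtype ∘ₗ x.linearProjOfIsCompl a h else 0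

/-- The ternary product `(xyz) = M_{xabz}(y)` where `M_{xabz} = P^a_x - P^z_b`,
i.e. the image of the submodule `y` under the endomorphism `P^a_x - P^z_b`. -/
noncomputable def ternary {R W : Type*} [Ring R] [AddCommGroup W] [Module R W]
    (a b x y z : Submodule R W) : Submodule R W :=
  Submodule.map (projEnd x a - projEnd b z) y

section Aux

variable {R W : Type*} [Ring R] [AddCommGroup W] [Module R W]

lemma projEnd_apply_mem {x a : Submodule R W} (h : IsCompl x a) (w : W) :
    projEnd x a w ∈ x := by
  rw [projEnd, dif_pos h]
  exact (x.linearProjOfIsCompl a h w).2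

lemma projEnd_apply_left {x a : Submodule R W} (h : IsCompl x a) {w : W} (hw : w ∈ x) :
    projEnd x a w = w := by
  rw [projEnd, dif_pos h]
  exact congrArg Subtype.val (x.linearProjOfIsCompl_apply_left h ⟨w, hw⟩)

lemma projEnd_apply_right {x a : Submodule R W} (h : IsCompl x a) {w : W} (hw : w ∈ a) :
    projEnd x a w = 0 := by
  rw [projEnd, dif_pos h]
  exact congrArg Subtype.val (x.linearProjOfIsCompl_apply_right' h hw)

lemma projEnd_eq_of {x a : Submodule R W} (h : IsCompl x a) {w s t : W}
    (hs : s ∈ x) (ht : t ∈ a) (hw : w = s + t) : projEnd x a w = s := by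
  rw [hw, map_add, projEnd_apply_left h hs, projEnd_apply_right h ht, add_zero]

lemma sub_projEnd_apply_mem {x a : Submodule R W} (h : IsCompl x a) (w : W) :
    w - projEnd x a w ∈ a := by
  obtain ⟨s, t, hs, ht, rfl⟩ := Submodule.codisjoint_iff_exists_add_eq.mp h.codisjoint w
  rw [projEnd_eq_of h hs ht rfl]
  simpa using ht

/-- Closure: the ternary product of common complements of `a` and `b` is again a
common complement of `a` and `b`. -/
lemma ternary_isCompl {a b x y z : Submodule R W}
    (hxa : IsCompl x a) (hxb : IsCompl x b) (hya : IsCompl y a) (hyb : IsCompl y b)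
    (hza : IsCompl z a) (hzb : IsCompl z b) :
    IsCompl (ternary a b x y z) a ∧ IsCompl (ternary a b x y z) b := by
  have hM : ∀ w, (projEnd x a - projEnd b z) w = projEnd x a w - projEnd b z w :=
    fun w => rfl
  constructor
  · constructor
    · rw [Submodule.disjoint_def]
      rintro ξ hξt hξa
      obtain ⟨w, hw, rfl⟩ := hξt
      rw [hM] at hξa ⊢
      -- w - projEnd b z w ∈ z, and it equals an element of a
      have hz1 : w - projEnd b z w ∈ z := sub_projEnd_apply_mem hzb.symm w
      have hz2 : w - projEnd b z w ∈ a := by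
        have h1 : w - projEnd x a w ∈ a := sub_projEnd_apply_mem hxa w
        have : w - projEnd b z w =
            (projEnd x a w - projEnd b z w) + (w - projEnd x a w) := by abel
        rw [this]; exact a.add_mem hξa h1
      have hz0 : w - projEnd b z w = 0 :=
        (Submodule.disjoint_def.mp hza.disjoint) _ hz1 hz2
      have hwb : w ∈ b := by
        have := projEnd_apply_mem hzb.symm w
        have hwe : w = projEnd b z w := sub_eq_zero.mp hz0
        rw [hwe]; exact this
      have hw0 : w = 0 := (Submodule.disjoint_def.mp hyb.disjoint) w hw hwb
      simp [hw0]
    · rw [codisjoint_iff_le_sup]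
      intro ξ _
      set ζ := projEnd z a ξ with hζdef
      have hζz : ζ ∈ z := projEnd_apply_mem hza ξ
      have hξζ : ξ - ζ ∈ a := sub_projEnd_apply_mem hza ξ
      set w := projEnd y b ζ with hwdef
      have hwy : w ∈ y := projEnd_apply_mem hyb ζ
      have hζw : ζ - w ∈ b := sub_projEnd_apply_mem hyb ζ
      have hqzw : projEnd b z w = w - ζ := by
        refine projEnd_eq_of hzb.symm ?_ hζz ?_
        · have : w - ζ = -(ζ - w) := by abel
          rw [this]; exact b.neg_mem hζw
        · abel
      have hMw : (projEnd x a - projEnd b z) w = projEnd x a w - (w - ζ) := by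
        rw [hM, hqzw]
      have : ξ = (projEnd x a - projEnd b z) w +
          ((ξ - ζ) + (w - projEnd x a w)) := by rw [hMw]; abel
      rw [this]
      exact Submodule.add_mem_sup ⟨w, hwy, rfl⟩
        (a.add_mem hξζ (sub_projEnd_apply_mem hxa w))
  · constructor
    · rw [Submodule.disjoint_def]
      rintro ξ hξt hξb
      obtain ⟨w, hw, rfl⟩ := hξt
      rw [hM] at hξb ⊢
      have hx1 : projEnd x a w ∈ x := projEnd_apply_mem hxa w
      have hx2 : projEnd x a w ∈ b := by
        have h1 : projEnd b z w ∈ b := projEnd_apply_mem hzb.symm w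
        have : projEnd x a w = (projEnd x a w - projEnd b z w) + projEnd b z w := by abel
        rw [this]; exact b.add_mem hξb h1
      have hx0 : projEnd x a w = 0 :=
        (Submodule.disjoint_def.mp hxb.disjoint) _ hx1 hx2
      have hwa : w ∈ a := by
        have := sub_projEnd_apply_mem hxa w
        rwa [hx0, sub_zero] at this
      have hw0 : w = 0 := (Submodule.disjoint_def.mp hya.disjoint) w hw hwa
      simp [hw0]
    · rw [codisjoint_iff_le_sup]
      intro ξ _
      set χ := projEnd x b ξ with hχdef
      have hχx : χ ∈ x := projEnd_apply_mem hxb ξ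
      have hξχ : ξ - χ ∈ b := sub_projEnd_apply_mem hxb ξ
      set w := projEnd y a χ with hwdef
      have hwy : w ∈ y := projEnd_apply_mem hya χ
      have hχw : χ - w ∈ a := sub_projEnd_apply_mem hya χ
      have hpxw : projEnd x a w = χ := by
        refine projEnd_eq_of hxa (t := w - χ) hχx ?_ (by abel)
        rw [← neg_sub χ w]; exact a.neg_mem hχw
      have : ξ = (projEnd x a - projEnd b z) w +
          ((ξ - χ) + projEnd b z w) := by rw [hM, hpxw]; abel
      rw [this]
      exact Submodule.add_mem_sup ⟨w, hwy, rfl⟩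
        (b.add_mem hξχ (projEnd_apply_mem hzb.symm w))

/-- The key pointwise computation for the para-associativity law. -/
lemma key_calc {a b x y z u v : Submodule R W}
    (hxa : IsCompl x a) (hxb : IsCompl x b) (hya : IsCompl y a) (hyb : IsCompl y b)
    (hza : IsCompl z a) (hzb : IsCompl z b) (hua : IsCompl u a) (hub : IsCompl u b)
    (hva : IsCompl v a) (hvb : IsCompl v b)
    {w : W} (hw : w ∈ y) :
    (projEnd x a - projEnd b (ternary a b z u v)) w
      = (projEnd (ternary a b x y z) a - projEnd b v)
          (projEnd u a (projEnd z b w)) := by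
  obtain ⟨ht1a, ht1b⟩ := ternary_isCompl hza hzb hua hub hva hvb
  obtain ⟨hsa, hsb⟩ := ternary_isCompl hxa hxb hya hyb hza hzb
  set ζ := projEnd z b w with hζdef
  have hζz : ζ ∈ z := projEnd_apply_mem hzb w
  have hβb : w - ζ ∈ b := sub_projEnd_apply_mem hzb w
  set ω := projEnd u a ζ with hωdef
  have hωu : ω ∈ u := projEnd_apply_mem hua ζ
  have hζω : ζ - ω ∈ a := sub_projEnd_apply_mem hua ζ
  -- (i) projEnd b t1 w = (w - ζ) + projEnd b v ω
  have hpzω : projEnd z a ω = ζ := by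
    refine projEnd_eq_of hza (t := ω - ζ) hζz ?_ (by abel)
    rw [← neg_sub ζ ω]; exact a.neg_mem hζω
  have hτ : (projEnd z a - projEnd b v) ω ∈ ternary a b z u v :=
    ⟨ω, hωu, rfl⟩
  have hi : projEnd b (ternary a b z u v) w = (w - ζ) + projEnd b v ω := by
    refine projEnd_eq_of ht1b.symm
      (b.add_mem hβb (projEnd_apply_mem hvb.symm ω)) hτ ?_
    have hMω : (projEnd z a - projEnd b v) ω = ζ - projEnd b v ω := by
      show projEnd z a ω - projEnd b v ω = _
      rw [hpzω]
    rw [hMω]; abel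
  -- (ii) projEnd s a ω = projEnd x a w - (w - ζ)
  have hqzw : projEnd b z w = w - ζ := by
    refine projEnd_eq_of hzb.symm hβb hζz ?_
    abel
  have hσ : (projEnd x a - projEnd b z) w ∈ ternary a b x y z := ⟨w, hw, rfl⟩
  have hσval : (projEnd x a - projEnd b z) w = projEnd x a w - (w - ζ) := by
    show projEnd x a w - projEnd b z w = _
    rw [hqzw]
  have hii : projEnd (ternary a b x y z) a ω = projEnd x a w - (w - ζ) := by
    refine projEnd_eq_of hsa (t := ω - (projEnd x a w - (w - ζ)))
      (hσval ▸ hσ) ?_ (by abel)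
    have : ω - (projEnd x a w - (w - ζ)) =
        (w - projEnd x a w) - (ζ - ω) := by abel
    rw [this]
    exact a.sub_mem (sub_projEnd_apply_mem hxa w) hζω
  show projEnd x a w - projEnd b (ternary a b z u v) w =
      projEnd (ternary a b x y z) a ω - projEnd b v ω
  rw [hi, hii]; abel

end Aux

/-- on the set `C_{ab}` of common complements of `a` and `b`, the
ternary operation `(xyz) := M_{xabz}(y)` satisfies the torsor identities
`(xyy) = x`, `(yyx) = x` and `(xy(zuv)) = ((xyz)uv)`. -/
theorem stmt2 {R W : Type*} [Ring R] [AddCommGroup W] [Module R W]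
    (a b x y z u v : Submodule R W)
    (hx : IsCompl x a ∧ IsCompl x b) (hy : IsCompl y a ∧ IsCompl y b)
    (hz : IsCompl z a ∧ IsCompl z b) (hu : IsCompl u a ∧ IsCompl u b)
    (hv : IsCompl v a ∧ IsCompl v b) :
    ternary a b x y y = x ∧
    ternary a b y y x = x ∧
    ternary a b x y (ternary a b z u v) = ternary a b (ternary a b x y z) u v := by
  obtain ⟨hxa, hxb⟩ := hx
  obtain ⟨hya, hyb⟩ := hy
  obtain ⟨hza, hzb⟩ := hz
  obtain ⟨hua, hub⟩ := hu
  obtain ⟨hva, hvb⟩ := hv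
  refine ⟨?_, ?_, ?_⟩
  · -- (xyy) = x
    apply le_antisymm
    · rintro ξ ⟨w, hw, rfl⟩
      show projEnd x a w - projEnd b y w ∈ x
      rw [projEnd_apply_right hyb.symm hw, sub_zero]
      exact projEnd_apply_mem hxa w
    · intro ξ hξ
      set w := projEnd y a ξ with hwdef
      have hwy : w ∈ y := projEnd_apply_mem hya ξ
      refine ⟨w, hwy, ?_⟩
      show projEnd x a w - projEnd b y w = ξ
      rw [projEnd_apply_right hyb.symm hwy, sub_zero]
      refine projEnd_eq_of hxa (t := w - ξ) hξ ?_ (by abel)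
      rw [← neg_sub ξ w]; exact a.neg_mem (sub_projEnd_apply_mem hya ξ)
  · -- (yyx) = x
    apply le_antisymm
    · rintro ξ ⟨w, hw, rfl⟩
      show projEnd y a w - projEnd b x w ∈ x
      rw [projEnd_apply_left hya hw]
      have hχ : projEnd x b w ∈ x := projEnd_apply_mem hxb w
      have : projEnd b x w = w - projEnd x b w :=
        projEnd_eq_of hxb.symm (sub_projEnd_apply_mem hxb w) hχ (by abel)
      rw [this]
      have : w - (w - projEnd x b w) = projEnd x b w := by abel
      rw [this]; exact hχ
    · intro ξ hξ
      set w := projEnd y b ξ with hwdef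
      have hwy : w ∈ y := projEnd_apply_mem hyb ξ
      refine ⟨w, hwy, ?_⟩
      show projEnd y a w - projEnd b x w = ξ
      rw [projEnd_apply_left hya hwy]
      have hqx : projEnd b x w = w - ξ := by
        refine projEnd_eq_of hxb.symm ?_ hξ (by abel)
        have : w - ξ = -(ξ - w) := by abel
        rw [this]; exact b.neg_mem (sub_projEnd_apply_mem hyb ξ)
      rw [hqx]; abel
  · -- para-associativity
    apply le_antisymm
    · rintro ξ ⟨w, hw, rfl⟩
      exact ⟨projEnd u a (projEnd z b w), projEnd_apply_mem hua _,
        (key_calc hxa hxb hya hyb hza hzb hua hub hva hvb hw).symm⟩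
    · rintro ξ ⟨ω, hω, rfl⟩
      set ζ := projEnd z a ω with hζdef
      have hζz : ζ ∈ z := projEnd_apply_mem hza ω
      have hωζ : ω - ζ ∈ a := sub_projEnd_apply_mem hza ω
      set w := projEnd y b ζ with hwdef
      have hwy : w ∈ y := projEnd_apply_mem hyb ζ
      have hζw : ζ - w ∈ b := sub_projEnd_apply_mem hyb ζ
      have h1 : projEnd z b w = ζ := by
        refine projEnd_eq_of hzb (t := w - ζ) hζz ?_ (by abel)
        rw [← neg_sub ζ w]; exact b.neg_mem hζw
      have h2 : projEnd u a (projEnd z b w) = ω := by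
        rw [h1]
        refine projEnd_eq_of hua (t := ζ - ω) hω ?_ (by abel)
        rw [← neg_sub ω ζ]; exact a.neg_mem hωζ
      refine ⟨w, hwy, ?_⟩
      rw [← h2]
      exact key_calc hxa hxb hya hyb hza hzb hua hub hva hvb hwy
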